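/- In the O'Hara–Zeilberger recurrence for G(n,k), if partitions of k are restricted to use only parts of size at most p, and p < 2k/(n+2), then the resulting restricted sum G'(n,k) equals 0. -/

import Mathlib

open Polynomial Finset

/-- The summand of the O'Hara–Zeilberger recurrence for `G(n,k)` corresponding to a partition
of `k` recorded by its multiplicity function `d` (`d i` = number of parts of size `i`):
`q^(k(Σ d_i) - k - Σ_{j<i}(i-j)d_i d_j) ∏_{i=0}^{k-1} G((k-i)n - 2i + 2Σ_{j<i}(i-j)d_{k-j}, d_{k-i})`. -/
noncomputable def contrib (Gr : ℤ → ℕ → Polynomial ℚ) (n k : ℕ) (d : ℕ → ℕ) : Polynomial ℚ :=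
  Polynomial.X ^ (k * (∑ i ∈ Finset.Icc 1 k, d i) - k
      - ∑ p ∈ (Finset.Icc 1 k ×ˢ Finset.Icc 1 k).filter (fun p => p.2 < p.1),
          (p.1 - p.2) * d p.1 * d p.2)
    * ∏ i ∈ Finset.range k,
        Gr (((k : ℤ) - (i : ℤ)) * (n : ℤ) - 2 * (i : ℤ)
              + 2 * ∑ j ∈ Finset.range i, ((i : ℤ) - (j : ℤ)) * (d (k - j) : ℤ))
          (d (k - i))

/-- If in the O'Hara–Zeilberger recurrence the partitions of `k` are restricted to parts of size
at most `p` with `p < 2k/(n+2)`, then the restricted sum `G'(n,k)` is `0`. -/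
theorem restricted_parts_eq_zero (G' : ℤ → ℕ → Polynomial ℚ) (n k p : ℕ)
    (hneg : ∀ (m : ℤ) (k' : ℕ), m < 0 → G' m k' = 0)
    (D : Finset (ℕ → ℕ))
    (hD : ∀ d : ℕ → ℕ, d ∈ D ↔
      ((∑ i ∈ Finset.Icc 1 k, i * d i = k) ∧ ∀ i : ℕ, (i = 0 ∨ p < i) → d i = 0))
    (hrec : G' (n : ℤ) k = ∑ d ∈ D, contrib G' n k d)
    (hp : p * (n + 2) < 2 * k) :
    G' (n : ℤ) k = 0 := by
  have hk : 0 < k := by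
    by_contra h
    push_neg at h
    interval_cases k <;> omega
  rw [hrec]
  apply Finset.sum_eq_zero
  intro d hd
  obtain ⟨hsum, hzero⟩ := (hD d).1 hd
  -- S := number of parts
  set S : ℕ := ∑ i ∈ Finset.Icc 1 k, d i with hSdef
  have hkS : k ≤ p * S := by
    calc k = ∑ i ∈ Finset.Icc 1 k, i * d i := hsum.symm
    _ ≤ ∑ i ∈ Finset.Icc 1 k, p * d i := by
        apply Finset.sum_le_sum
        intro i hi
        rcases le_or_gt i p with h | h
        · exact Nat.mul_le_mul_right _ h
        · rw [hzero i (Or.inr h)]; simp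
    _ = p * S := by rw [hSdef, Finset.mul_sum]
  have hnS : n + 2 < 2 * S := by
    have hp0 : 0 < p := by
      rcases Nat.eq_zero_or_pos p with h | h
      · subst h; omega
      · exact h
    have : p * (n + 2) < p * (2 * S) := by
      calc p * (n + 2) < 2 * k := hp
      _ ≤ 2 * (p * S) := by omega
      _ = p * (2 * S) := by ring
    exact Nat.lt_of_mul_lt_mul_left this
  unfold contrib
  rw [Finset.prod_eq_zero (i := k - 1) (Finset.mem_range.2 (by omega)), mul_zero]
  -- compute the inner sum
  have hT : (∑ j ∈ Finset.range (k - 1), (((k - 1 : ℕ) : ℤ) - (j : ℤ)) * (d (k - j) : ℤ))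
      = ∑ i ∈ Finset.Icc 2 k, ((i : ℤ) - 1) * (d i : ℤ) := by
    apply Finset.sum_nbij' (fun j => k - j) (fun i => k - i)
    · intro j hj
      simp only [Finset.mem_range] at hj
      simp only [Finset.mem_Icc]
      omega
    · intro i hi
      simp only [Finset.mem_Icc] at hi
      simp only [Finset.mem_range]
      omega
    · intro j hj
      simp only [Finset.mem_range] at hj
      omega
    · intro i hi
      simp only [Finset.mem_Icc] at hi
      omega
    · intro j hj
      simp only [Finset.mem_range] at hj
      have h1 : ((k - j : ℕ) : ℤ) = (k : ℤ) - j := by omega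
      have h2 : ((k - 1 : ℕ) : ℤ) = (k : ℤ) - 1 := by omega
      rw [h1, h2]
      ring
  have hIcc : (∑ i ∈ Finset.Icc 2 k, ((i : ℤ) - 1) * (d i : ℤ))
      = ∑ i ∈ Finset.Icc 1 k, ((i : ℤ) - 1) * (d i : ℤ) := by
    rw [Finset.Icc_eq_cons_Ioc (show 1 ≤ k from hk), Finset.sum_cons]
    have : Finset.Ioc 1 k = Finset.Icc 2 k := by
      ext x; simp [Finset.mem_Ioc, Finset.mem_Icc]; omega
    rw [this]; ring
  have hsplit : (∑ i ∈ Finset.Icc 1 k, ((i : ℤ) - 1) * (d i : ℤ)) = (k : ℤ) - (S : ℤ) := by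
    have h1 : (∑ i ∈ Finset.Icc 1 k, ((i : ℤ) - 1) * (d i : ℤ))
        = (∑ i ∈ Finset.Icc 1 k, (i : ℤ) * (d i : ℤ)) - ∑ i ∈ Finset.Icc 1 k, (d i : ℤ) := by
      rw [← Finset.sum_sub_distrib]; apply Finset.sum_congr rfl; intro i _; ring
    have h2 : (∑ i ∈ Finset.Icc 1 k, (i : ℤ) * (d i : ℤ)) = (k : ℤ) := by
      rw [← Nat.cast_inj (R := ℤ)] at hsum
      push_cast at hsum ⊢
      exact hsum
    have h3 : (∑ i ∈ Finset.Icc 1 k, (d i : ℤ)) = (S : ℤ) := by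
      rw [hSdef]; push_cast; rfl
    rw [h1, h2, h3]
  apply hneg
  rw [hT, hIcc, hsplit]
  have h2 : ((k - 1 : ℕ) : ℤ) = (k : ℤ) - 1 := by omega
  rw [h2]
  have : (2 : ℤ) * S > (n : ℤ) + 2 := by exact_mod_cast hnS
  nlinarith [this]
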